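/- Let N ≥ 1, m ∈ ℝ, c ∈ (0,1), and let Γ, Γ′ ⊆ ℝ^N ∖ {0} be open cones such that η ∈ Γ whenever ξ ∈ Γ′, η ∈ ℝ^N and |ξ − η| ≤ c|ξ|. Let F : ℤ^N × ℤ^N → ℂ satisfy symbol-type bounds of order m, and let g : ℤ^N → ℂ be rapidly decreasing on Γ ∩ ℤ^N. Then for every k ∈ ℕ there exists C′_k > 0 such that Σ_{η ∈ ℤ^N, |η| < c|ξ|} |F(η, ξ−η)| · |g(ξ−η)| ≤ C′_k (1+|ξ|)^(−k) for every ξ ∈ Γ′ ∩ ℤ^N. -/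

import Mathlib

/-- Inclusion of `ℤᴺ` into `ℝᴺ` with the Euclidean norm. -/
noncomputable def iZ (N : ℕ) (ξ : Fin N → ℤ) : EuclideanSpace ℝ (Fin N) :=
  WithLp.toLp 2 (fun i => (ξ i : ℝ))

/-- An open cone in `ℝᴺ ∖ {0}`. -/
def IsOpenCone (N : ℕ) (Γ : Set (EuclideanSpace ℝ (Fin N))) : Prop :=
  IsOpen Γ ∧ (0 : EuclideanSpace ℝ (Fin N)) ∉ Γ ∧
    ∀ ξ ∈ Γ, ∀ l : ℝ, 0 < l → l • ξ ∈ Γ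

/-- `F` satisfies symbol-type bounds of order `m`. -/
def SymbolBounds (N : ℕ) (m : ℝ) (F : (Fin N → ℤ) → (Fin N → ℤ) → ℂ) : Prop :=
  ∀ k : ℕ, ∃ D > (0 : ℝ), ∀ η ζ : Fin N → ℤ,
    ‖F η ζ‖ ≤ D * ((1 + ‖iZ N η‖) ^ k)⁻¹ * (1 + ‖iZ N ζ‖) ^ m

/-- `g` is rapidly decreasing on `Γ ∩ ℤᴺ`. -/
def RapidlyDecreasingOn (N : ℕ) (g : (Fin N → ℤ) → ℂ)
    (Γ : Set (EuclideanSpace ℝ (Fin N))) : Prop :=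
  ∀ k : ℕ, ∃ C > (0 : ℝ), ∀ ζ : Fin N → ℤ, iZ N ζ ∈ Γ →
    ‖g ζ‖ ≤ C * ((1 + ‖iZ N ζ‖) ^ k)⁻¹

lemma summable_int_weight : Summable (fun n : ℤ => ((1 + |(n:ℝ)|)^2)⁻¹) := by
  have hN : Summable (fun n : ℕ => ((1 + (n:ℝ))^2)⁻¹) := by
    have h2 : Summable (fun n : ℕ => (((n:ℝ))^2)⁻¹) := Real.summable_nat_pow_inv.mpr one_lt_two
    have := (summable_nat_add_iff 1).mpr h2
    apply this.congr
    intro n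
    push_cast
    ring_nf
  apply Summable.of_nat_of_neg
  · exact hN.congr (by intro n; norm_num)
  · exact hN.congr (by intro n; norm_num)

lemma summable_pi_weight : ∀ n : ℕ, Summable (fun η : Fin n → ℤ => ∏ i, ((1 + |(η i : ℝ)|)^2)⁻¹)
  | 0 => Summable.of_finite
  | (n+1) => by
    have hmul := summable_int_weight.mul_of_nonneg (summable_pi_weight n)
      (fun _ => by positivity) (fun x => Finset.prod_nonneg fun i _ => by positivity)
    rw [← (Fin.consEquiv (fun _ : Fin (n+1) => ℤ)).summable_iff]
    apply hmul.congr
    rintro ⟨x, y⟩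
    simp [Fin.consEquiv, Fin.prod_univ_succ, mul_comm]
lemma abs_coord_le_norm {N : ℕ} (x : EuclideanSpace ℝ (Fin N)) (i : Fin N) : |x i| ≤ ‖x‖ := by
  rw [EuclideanSpace.norm_eq, ← Real.sqrt_sq_eq_abs]
  apply Real.sqrt_le_sqrt
  have := Finset.single_le_sum (f := fun j => ‖x j‖^2) (fun j _ => sq_nonneg _) (Finset.mem_univ i)
  simpa [Real.norm_eq_abs, sq_abs] using this

lemma summable_weight (N : ℕ) :
    Summable (fun η : Fin N → ℤ => ((1 + ‖iZ N η‖) ^ (2*N))⁻¹) := by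
  apply (summable_pi_weight N).of_nonneg_of_le (fun η => by positivity)
  intro η
  have h0 : ∀ i : Fin N, (0:ℝ) ≤ (1 + |(η i : ℝ)|)^2 := fun i => by positivity
  rw [Finset.prod_inv_distrib]
  apply inv_anti₀
  · positivity
  · calc ∏ i, (1 + |(η i : ℝ)|)^2 ≤ ∏ _i : Fin N, (1 + ‖iZ N η‖)^2 := by
          apply Finset.prod_le_prod (fun i _ => h0 i)
          intro i _
          have : |(η i : ℝ)| ≤ ‖iZ N η‖ := abs_coord_le_norm (iZ N η) i
          have h1 : (0:ℝ) ≤ 1 + |(η i : ℝ)| := by positivity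
          apply pow_le_pow_left₀ h1
          linarith
        _ = (1 + ‖iZ N η‖) ^ (2*N) := by
          rw [Finset.prod_const, Finset.card_univ, Fintype.card_fin, ← pow_mul, mul_comm]
lemma iZ_sub {N : ℕ} (a b : Fin N → ℤ) : iZ N (a - b) = iZ N a - iZ N b := by
  ext i; simp [iZ]

theorem stmt_14 (N : ℕ) (hN : 1 ≤ N) (m : ℝ) (c : ℝ) (hc0 : 0 < c) (hc1 : c < 1)
    (Γ Γ' : Set (EuclideanSpace ℝ (Fin N)))
    (hΓ : IsOpenCone N Γ) (hΓ' : IsOpenCone N Γ')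
    (hcone : ∀ ξ ∈ Γ', ∀ η : EuclideanSpace ℝ (Fin N), ‖ξ - η‖ ≤ c * ‖ξ‖ → η ∈ Γ)
    (F : (Fin N → ℤ) → (Fin N → ℤ) → ℂ) (hF : SymbolBounds N m F)
    (g : (Fin N → ℤ) → ℂ) (hg : RapidlyDecreasingOn N g Γ) :
    ∀ k : ℕ, ∃ C' > (0 : ℝ), ∀ ξ : Fin N → ℤ, iZ N ξ ∈ Γ' →
      Summable (fun η : Fin N → ℤ =>
        if ‖iZ N η‖ < c * ‖iZ N ξ‖ then
          ‖F η (ξ - η)‖ * ‖g (ξ - η)‖ else 0) ∧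
      (∑' η : Fin N → ℤ,
        if ‖iZ N η‖ < c * ‖iZ N ξ‖ then
          ‖F η (ξ - η)‖ * ‖g (ξ - η)‖ else 0)
        ≤ C' * ((1 + ‖iZ N ξ‖) ^ k)⁻¹ := by
  intro k
  obtain ⟨D, hD, hFD⟩ := hF (2*N + k)
  obtain ⟨C, hC, hgC⟩ := hg (⌈m⌉₊ + k)
  set S : ℝ := ∑' η : Fin N → ℤ, ((1 + ‖iZ N η‖) ^ (2*N))⁻¹ with hS
  have hSnn : 0 ≤ S := tsum_nonneg (fun η => by positivity)
  have hc1' : (0:ℝ) < 1 - c := by linarith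
  refine ⟨D * C * ((1-c)^k)⁻¹ * (S + 1), by positivity, ?_⟩
  intro ξ hξ
  set X : ℝ := 1 + ‖iZ N ξ‖ with hX
  have hX1 : 1 ≤ X := by rw [hX]; have := norm_nonneg (iZ N ξ); linarith
  set M : ℝ := D * C * ((1-c)^k)⁻¹ * (X^k)⁻¹ with hM
  have hMnn : 0 ≤ M := by positivity
  -- key pointwise bound
  have key : ∀ η : Fin N → ℤ,
      (if ‖iZ N η‖ < c * ‖iZ N ξ‖ then
          ‖F η (ξ - η)‖ * ‖g (ξ - η)‖ else 0)
        ≤ M * ((1 + ‖iZ N η‖) ^ (2*N))⁻¹ := by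
    intro η
    split_ifs with hη
    · set ζ := ξ - η with hζ
      set A : ℝ := 1 + ‖iZ N η‖ with hA
      set B : ℝ := 1 + ‖iZ N ζ‖ with hB
      have hA1 : 1 ≤ A := by rw [hA]; have := norm_nonneg (iZ N η); linarith
      have hB1 : 1 ≤ B := by rw [hB]; have := norm_nonneg (iZ N ζ); linarith
      have hζΓ : iZ N ζ ∈ Γ := by
        apply hcone _ hξ
        have : iZ N ξ - iZ N ζ = iZ N η := by
          rw [hζ, iZ_sub]; abel
        rw [this]
        exact hη.le
      -- B is comparable to X
      have hBX : (1 - c) * X ≤ B := by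
        have h1 : ‖iZ N ξ‖ - ‖iZ N η‖ ≤ ‖iZ N ζ‖ := by
          rw [hζ, iZ_sub]; exact norm_sub_norm_le _ _
        have := hη.le
        rw [hB, hX]
        nlinarith [norm_nonneg (iZ N ξ)]
      -- rpow juggling
      have hrp : B ^ m * (B ^ (⌈m⌉₊ + k))⁻¹ ≤ ((1-c)^k)⁻¹ * (X^k)⁻¹ := by
        have hB0 : (0:ℝ) < B := lt_of_lt_of_le one_pos hB1
        have e1 : B ^ m * (B ^ (⌈m⌉₊ + k))⁻¹ = B ^ (m - ((⌈m⌉₊ : ℝ) + k)) := by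
          rw [Real.rpow_sub hB0]
          rw [div_eq_mul_inv]
          congr 2
          rw [← Real.rpow_natCast B (⌈m⌉₊ + k)]
          push_cast
          ring_nf
        have e2 : B ^ (m - ((⌈m⌉₊ : ℝ) + k)) ≤ B ^ (-(k:ℝ)) := by
          apply Real.rpow_le_rpow_of_exponent_le hB1
          have := Nat.le_ceil m
          linarith
        have e3 : B ^ (-(k:ℝ)) = (B ^ k)⁻¹ := by
          rw [Real.rpow_neg hB0.le, Real.rpow_natCast]
        have e4 : (B ^ k)⁻¹ ≤ ((1-c)^k)⁻¹ * (X^k)⁻¹ := by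
          rw [← mul_inv, ← mul_pow]
          apply inv_anti₀ (by positivity)
          exact pow_le_pow_left₀ (by positivity) hBX k
        rw [e1]
        refine le_trans e2 ?_
        rw [e3]
        exact e4
      have hAk : (A ^ (2*N + k))⁻¹ ≤ (A ^ (2*N))⁻¹ := by
        apply inv_anti₀ (by positivity)
        exact pow_le_pow_right₀ hA1 (Nat.le_add_right _ _)
      calc ‖F η ζ‖ * ‖g ζ‖
          ≤ (D * (A ^ (2*N + k))⁻¹ * B ^ m) * (C * (B ^ (⌈m⌉₊ + k))⁻¹) := by
            apply mul_le_mul (hFD η ζ) (hgC ζ hζΓ) (norm_nonneg _)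
            have hBm : (0:ℝ) ≤ B ^ m := Real.rpow_nonneg (by linarith) m
            positivity
        _ = (D * C) * ((A ^ (2*N + k))⁻¹) * (B ^ m * (B ^ (⌈m⌉₊ + k))⁻¹) := by ring
        _ ≤ (D * C) * ((A ^ (2*N))⁻¹) * (((1-c)^k)⁻¹ * (X^k)⁻¹) := by
            apply mul_le_mul
            · apply mul_le_mul_of_nonneg_left hAk (by positivity)
            · exact hrp
            · have hBm : (0:ℝ) ≤ B ^ m := Real.rpow_nonneg (by linarith) m
              positivity
            · positivity
        _ = M * (A ^ (2*N))⁻¹ := by rw [hM]; ring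
    · positivity
  have hsum2 : Summable (fun η : Fin N → ℤ => M * ((1 + ‖iZ N η‖) ^ (2*N))⁻¹) :=
    (summable_weight N).mul_left M
  have hsum : Summable (fun η : Fin N → ℤ =>
      if ‖iZ N η‖ < c * ‖iZ N ξ‖ then
        ‖F η (ξ - η)‖ * ‖g (ξ - η)‖ else 0) := by
    apply hsum2.of_nonneg_of_le (fun η => ?_) key
    split_ifs
    · positivity
    · exact le_refl 0
  refine ⟨hsum, ?_⟩
  calc (∑' η : Fin N → ℤ,
        if ‖iZ N η‖ < c * ‖iZ N ξ‖ then
          ‖F η (ξ - η)‖ * ‖g (ξ - η)‖ else 0)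
      ≤ ∑' η : Fin N → ℤ, M * ((1 + ‖iZ N η‖) ^ (2*N))⁻¹ := Summable.tsum_le_tsum key hsum hsum2
    _ = M * S := by rw [hS, tsum_mul_left]
    _ ≤ (D * C * ((1-c)^k)⁻¹ * (S + 1)) * (X^k)⁻¹ := by
        rw [hM]
        have : (0:ℝ) ≤ (X^k)⁻¹ := by positivity
        nlinarith [hD.le, hC.le, inv_nonneg.2 (pow_nonneg hc1'.le k)]
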